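/- arXiv:1507.06689 — 3 statements merged into one kernel-verified Lean document; each statement's English description precedes it below -/
import Mathlib

section
/- Let F = (A,R) be an argumentation framework and let S ⊆ A be admissible in F. Then S is a preferred extension of F if and only if for every admissible set E ⊆ A with E ⊄ S (i.e., E is not a subset of S), the union E ∪ S is not conflict-free in F. -/
variable {α : Type*}

/-- S is conflict-free w.r.t. attack relation R: no a,b ∈ S with (a,b) ∈ R. -/
def ConflictFree (R : Set (α × α)) (S : Set α) : Prop :=
  ∀ a ∈ S, ∀ b ∈ S, (a, b) ∉ R

/-- Argument a is defended by S: every attacker b ∈ A of a is attacked by some c ∈ S. -/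
def Defends (A : Set α) (R : Set (α × α)) (S : Set α) (a : α) : Prop :=
  ∀ b ∈ A, (b, a) ∈ R → ∃ c ∈ S, (c, b) ∈ R

/-- S is admissible: S ⊆ A, conflict-free, and each s ∈ S is defended by S. -/
def Admissible (A : Set α) (R : Set (α × α)) (S : Set α) : Prop :=
  S ⊆ A ∧ ConflictFree R S ∧ ∀ s ∈ S, Defends A R S s

/-- S is a preferred extension: admissible and no admissible strict superset. -/
def Preferred (A : Set α) (R : Set (α × α)) (S : Set α) : Prop :=
  Admissible A R S ∧ ¬ ∃ T, Admissible A R T ∧ S ⊂ T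

/-- The range S⁺ of S w.r.t. R: S together with everything attacked by S. -/
def rangeOf (R : Set (α × α)) (S : Set α) : Set α :=
  S ∪ {x | ∃ y ∈ S, (y, x) ∈ R}

/-- S is a stable extension: conflict-free subset of A with S⁺ = A. -/
def Stable (A : Set α) (R : Set (α × α)) (S : Set α) : Prop :=
  S ⊆ A ∧ ConflictFree R S ∧ rangeOf R S = A

/-- S is a stage extension: conflict-free and no conflict-free T ⊆ A with T⁺ ⊋ S⁺. -/
def Stage (A : Set α) (R : Set (α × α)) (S : Set α) : Prop :=
  S ⊆ A ∧ ConflictFree R S ∧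
    ¬ ∃ T, T ⊆ A ∧ ConflictFree R T ∧ rangeOf R S ⊂ rangeOf R T

/-- S is a semi-stable extension: admissible and no admissible T with T⁺ ⊋ S⁺. -/
def SemiStable (A : Set α) (R : Set (α × α)) (S : Set α) : Prop :=
  Admissible A R S ∧ ¬ ∃ T, Admissible A R T ∧ rangeOf R S ⊂ rangeOf R T

theorem stmt_0 (A : Set α) (R : Set (α × α)) (hR : R ⊆ A ×ˢ A)
    (S : Set α) (hS : Admissible A R S) :
    Preferred A R S ↔
      ∀ E : Set α, E ⊆ A → Admissible A R E → ¬ E ⊆ S →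
        ¬ ConflictFree R (E ∪ S) := by
  constructor
  · rintro ⟨_, hmax⟩ E hEA hE hES hCF
    apply hmax
    refine ⟨E ∪ S, ⟨Set.union_subset hEA hS.1, hCF, ?_⟩, ?_⟩
    · rintro s (hs | hs)
      · intro b hb hba
        obtain ⟨c, hc, hcb⟩ := hE.2.2 s hs b hb hba
        exact ⟨c, Or.inl hc, hcb⟩
      · intro b hb hba
        obtain ⟨c, hc, hcb⟩ := hS.2.2 s hs b hb hba
        exact ⟨c, Or.inr hc, hcb⟩
    · refine ⟨Set.subset_union_right, fun h => ?_⟩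
      exact hES (fun e he => h (Or.inl he))
  · intro h
    refine ⟨hS, ?_⟩
    rintro ⟨T, hT, hST⟩
    have hTS : ¬ T ⊆ S := fun hh => hST.2 hh
    have := h T hT.1 hT hTS
    apply this
    intro a ha b hb
    exact hT.2.1 a (by rcases ha with h'|h' <;> [exact h'; exact hST.1 h']) b (by rcases hb with h'|h' <;> [exact h'; exact hST.1 h'])
end

section
/- Let F = (A,R) be an argumentation framework. If F has at least one stable extension, then the set of stable extensions of F equals the set of semi-stable extensions of F. -/
variable {α : Type*}

lemma rangeOf_subset {A : Set α} {R : Set (α × α)} (hR : R ⊆ A ×ˢ A) {S : Set α}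
    (hS : S ⊆ A) : rangeOf R S ⊆ A := by
  rintro x (hx | ⟨y, _, hyx⟩)
  · exact hS hx
  · exact (hR hyx).2

lemma stable_admissible {A : Set α} {R : Set (α × α)} {S : Set α}
    (hS : Stable A R S) : Admissible A R S := by
  obtain ⟨hSA, hcf, hrange⟩ := hS
  refine ⟨hSA, hcf, fun s hs b hb hba => ?_⟩
  have : b ∈ rangeOf R S := hrange ▸ hb
  rcases this with hbS | ⟨c, hc, hcb⟩
  · exact absurd hba (hcf b hbS s hs)
  · exact ⟨c, hc, hcb⟩

theorem stmt_14 (A : Set α) (R : Set (α × α)) (hR : R ⊆ A ×ˢ A)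
    (h : ∃ S : Set α, Stable A R S) :
    {S : Set α | Stable A R S} = {S : Set α | SemiStable A R S} := by
  obtain ⟨S0, hS0⟩ := h
  ext S
  simp only [Set.mem_setOf_eq]
  constructor
  · intro hS
    refine ⟨stable_admissible hS, ?_⟩
    rintro ⟨T, hT, hlt⟩
    exact hlt.not_subset
      ((rangeOf_subset hR hT.1).trans_eq hS.2.2.symm)
  · rintro ⟨hadm, hmax⟩
    have hrange : rangeOf R S = A := by
      by_contra hne
      exact hmax ⟨S0, stable_admissible hS0, hS0.2.2 ▸
        (rangeOf_subset hR hadm.1).ssubset_of_ne hne⟩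
    exact ⟨hadm.1, hadm.2.1, hrange⟩
end

section
/- Let F = (A,R) be an argumentation framework with A finite. Then F possesses at least one semi-stable extension. -/
variable {α : Type*}

theorem stmt_18 (A : Set α) (R : Set (α × α)) (hR : R ⊆ A ×ˢ A)
    (hA : A.Finite) :
    ∃ S : Set α, SemiStable A R S := by
  have hrange : ∀ S : Set α, S ⊆ A → rangeOf R S ⊆ A := by
    intro S hS x hx
    rcases hx with hx | ⟨y, hy, hyx⟩
    · exact hS hx
    · exact (hR hyx).2
  have hemp : Admissible A R (∅ : Set α) := by
    refine ⟨by simp, by intro a ha; simp at ha, by intro s hs; simp at hs⟩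
  set N : Set ℕ := {n | ∃ S, Admissible A R S ∧ (rangeOf R S).ncard = n} with hN
  have hNne : N.Nonempty := ⟨_, ∅, hemp, rfl⟩
  have hNbdd : ∀ n ∈ N, n ≤ A.ncard := by
    rintro n ⟨S, hS, rfl⟩
    exact Set.ncard_le_ncard (hrange S hS.1) hA
  obtain ⟨m, hmN, hmax⟩ := Set.Finite.exists_maximalFor id N
    (Set.Finite.subset (Set.finite_Icc 0 A.ncard)
      (fun n hn => ⟨Nat.zero_le n, hNbdd n hn⟩)) hNne
  obtain ⟨S, hS, hScard⟩ := hmN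
  refine ⟨S, hS, ?_⟩
  rintro ⟨T, hT, hsub⟩
  have hTfin : (rangeOf R T).Finite := hA.subset (hrange T hT.1)
  have hlt : (rangeOf R S).ncard < (rangeOf R T).ncard :=
    Set.ncard_lt_ncard hsub hTfin
  have : (rangeOf R T).ncard ≤ m :=
    hmax ⟨T, hT, rfl⟩ (le_of_lt (by rw [hScard] at hlt; exact hlt))
  omega
end
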